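/- Let A ∈ ℝ^{n×n} be row-stochastic and v(x) = max_i x_i - min_i x_i. Then v(Ax) < v(x) holds for every x not in the span of the all-ones vector if and only if A is scrambling. -/
import Mathlib


open MeasureTheory Filter

def IsStochastic {n : ℕ} (A : Matrix (Fin n) (Fin n) ℝ) : Prop :=
  (∀ i j, 0 ≤ A i j) ∧ ∀ i, ∑ j, A i j = 1

noncomputable def tau {n : ℕ} (A : Matrix (Fin n) (Fin n) ℝ) : ℝ :=
  1 - ⨅ p : Fin n × Fin n, ∑ s, min (A p.1 s) (A p.2 s)

def Scrambling {n : ℕ} (A : Matrix (Fin n) (Fin n) ℝ) : Prop :=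
  ∀ i j, ∃ s, 0 < A i s ∧ 0 < A j s

noncomputable def spread {n : ℕ} (x : Fin n → ℝ) : ℝ := (⨆ i, x i) - ⨅ i, x i

theorem spread_strict_decrease_iff_scrambling {n : ℕ} (hn : 0 < n)
    (A : Matrix (Fin n) (Fin n) ℝ) (hA : IsStochastic A) :
    (∀ x : Fin n → ℝ, (∀ c : ℝ, x ≠ fun _ => c) → spread (A.mulVec x) < spread x)
      ↔ Scrambling A := by
  haveI : Nonempty (Fin n) := Fin.pos_iff_nonempty.mp hn
  obtain ⟨hpos, hsum⟩ := hA
  constructor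
  · -- strict decrease → scrambling
    intro H i j
    by_contra hcon
    push_neg at hcon
    -- hcon : ∀ s, 0 < A i s → A j s ≤ 0
    have hz : ∀ s, 0 < A i s → A j s = 0 := fun s hs =>
      le_antisymm (hcon s hs) (hpos j s)
    set x : Fin n → ℝ := fun s => if 0 < A i s then (1:ℝ) else 0 with hx
    -- row i has a positive entry
    have hsi : ∃ s, 0 < A i s := by
      by_contra h
      push_neg at h
      have : ∑ s, A i s = 0 := Finset.sum_eq_zero fun s _ =>
        le_antisymm (h s) (hpos i s)
      rw [hsum i] at this; norm_num at this
    -- row i has a zero entry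
    have hti : ∃ t, ¬ 0 < A i t := by
      by_contra h
      push_neg at h
      have : ∑ s, A j s = 0 := Finset.sum_eq_zero fun s _ => hz s (h s)
      rw [hsum j] at this; norm_num at this
    obtain ⟨s0, hs0⟩ := hsi
    obtain ⟨t0, ht0⟩ := hti
    have hxnc : ∀ c : ℝ, x ≠ fun _ => c := by
      intro c hc
      have h1 : x s0 = c := congrFun hc s0
      have h0 : x t0 = c := congrFun hc t0
      simp only [hx, if_pos hs0] at h1
      simp only [hx, if_neg ht0] at h0
      rw [← h0] at h1; norm_num at h1
    have hAxi : A.mulVec x i = 1 := by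
      have : ∀ s, A i s * x s = A i s := by
        intro s
        by_cases h : 0 < A i s
        · simp [hx, if_pos h]
        · have : A i s = 0 := le_antisymm (not_lt.mp h) (hpos i s)
          simp [this]
      simp only [Matrix.mulVec, dotProduct]
      rw [Finset.sum_congr rfl fun s _ => this s, hsum i]
    have hAxj : A.mulVec x j = 0 := by
      simp only [Matrix.mulVec, dotProduct]
      apply Finset.sum_eq_zero
      intro s _
      by_cases h : 0 < A i s
      · rw [hz s h]; ring
      · simp [hx, if_neg h]
    have hsup : (1:ℝ) ≤ ⨆ k, A.mulVec x k := by
      rw [← hAxi]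
      exact le_ciSup (Set.finite_range _).bddAbove i
    have hinf : (⨅ k, A.mulVec x k) ≤ 0 := by
      rw [← hAxj]
      exact ciInf_le (Set.finite_range _).bddBelow j
    have hbig : (1:ℝ) ≤ spread (A.mulVec x) := by
      unfold spread; linarith
    have hsmall : spread x ≤ 1 := by
      have h1 : (⨆ k, x k) ≤ 1 := by
        apply ciSup_le
        intro k; simp only [hx]; split <;> norm_num
      have h2 : (0:ℝ) ≤ ⨅ k, x k := by
        apply le_ciInf
        intro k; simp only [hx]; split <;> norm_num
      unfold spread; linarith
    have := H x hxnc
    linarith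
  · -- scrambling → strict decrease
    intro hS x hxnc
    set M := ⨆ k, x k with hM
    set m := ⨅ k, x k with hm
    have hxM : ∀ k, x k ≤ M := fun k => le_ciSup (Set.finite_range x).bddAbove k
    have hmx : ∀ k, m ≤ x k := fun k => ciInf_le (Set.finite_range x).bddBelow k
    have hspos : 0 < spread x := by
      have : ∃ a b, x a ≠ x b := by
        by_contra h
        push_neg at h
        exact hxnc (x ⟨0, hn⟩) (funext fun k => h k ⟨0, hn⟩)
      obtain ⟨a, b, hab⟩ := this
      rcases lt_or_gt_of_ne hab with h | h
      · have := hxM b; have := hmx a; unfold spread; linarith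
      · have := hxM a; have := hmx b; unfold spread; linarith
    have key : ∀ i j, A.mulVec x i - A.mulVec x j < spread x := by
      intro i j
      obtain ⟨s', hs'1, hs'2⟩ := hS i j
      set c := ∑ s, min (A i s) (A j s) with hc
      have hcpos : 0 < c := by
        apply Finset.sum_pos' (fun s _ => le_min (hpos i s) (hpos j s))
        exact ⟨s', Finset.mem_univ s', lt_min hs'1 hs'2⟩
      have hsum_i : ∑ s, (A i s - min (A i s) (A j s)) = 1 - c := by
        rw [Finset.sum_sub_distrib, hsum i, hc]
      have hsum_j : ∑ s, (A j s - min (A i s) (A j s)) = 1 - c := by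
        rw [Finset.sum_sub_distrib, hsum j, hc]
      have hup : A.mulVec x i - A.mulVec x j ≤ (1 - c) * (M - m) := by
        have e1 : A.mulVec x i - A.mulVec x j
            = ∑ s, (A i s - min (A i s) (A j s)) * x s
              - ∑ s, (A j s - min (A i s) (A j s)) * x s := by
          simp only [Matrix.mulVec, dotProduct]
          rw [← Finset.sum_sub_distrib, ← Finset.sum_sub_distrib]
          congr 1; ext s; ring
        have b1 : ∑ s, (A i s - min (A i s) (A j s)) * x s ≤ (1 - c) * M := by
          rw [← hsum_i, Finset.sum_mul]
          apply Finset.sum_le_sum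
          intro s _
          exact mul_le_mul_of_nonneg_left (hxM s) (by simp [min_le_left])
        have b2 : (1 - c) * m ≤ ∑ s, (A j s - min (A i s) (A j s)) * x s := by
          rw [← hsum_j, Finset.sum_mul]
          apply Finset.sum_le_sum
          intro s _
          exact mul_le_mul_of_nonneg_left (hmx s) (by simp [min_le_right])
        rw [e1]; linarith
      have : (1 - c) * (M - m) < 1 * (M - m) := by
        apply mul_lt_mul_of_pos_right _ hspos
        linarith
      unfold spread at *
      linarith
    obtain ⟨i0, hi0⟩ := Finite.exists_max (A.mulVec x)
    obtain ⟨j0, hj0⟩ := Finite.exists_min (A.mulVec x)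
    have h1 : (⨆ k, A.mulVec x k) ≤ A.mulVec x i0 := ciSup_le hi0
    have h2 : A.mulVec x j0 ≤ ⨅ k, A.mulVec x k := le_ciInf hj0
    have := key i0 j0
    unfold spread; unfold spread at this
    linarith
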